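/- Let G be a graph and A₀ a minimal (by size) vertex subset with |A₀| ≥ 2 violating the sparsity bound |E(G[A])| ≤ 1 + c(|A|-2) for a constant c ≥ 1. Then G[A₀] is 2-connected. -/
import Mathlib


/-- The number of edges of `G` with both endpoints in `A`. -/
noncomputable def edgeCountOn {V : Type*} (G : SimpleGraph V) (A : Set V) : ℕ :=
  {e ∈ G.edgeSet | ∀ v ∈ e, v ∈ A}.ncard

/-- A vertex set `A` is `c`-bad if `|A| ≥ 2` and `|E(G[A])| > 1 + c(|A|-2)`. -/
def IsBad {V : Type*} (G : SimpleGraph V) (c : ℝ) (A : Finset V) : Prop :=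
  2 ≤ A.card ∧ 1 + c * ((A.card : ℝ) - 2) < (edgeCountOn G ↑A : ℝ)

lemma edgeSetOn_finite {V : Type*} (G : SimpleGraph V) (A : Finset V) :
    {e ∈ G.edgeSet | ∀ v ∈ e, v ∈ (A : Set V)}.Finite := by
  apply Set.Finite.subset ((A.finite_toSet.prod A.finite_toSet).image (fun p => s(p.1, p.2)))
  rintro e ⟨_, hA⟩
  induction e with
  | _ a b =>
    exact ⟨(a, b), ⟨hA a (Sym2.mem_mk_left a b), hA b (Sym2.mem_mk_right a b)⟩, rfl⟩

lemma edgeCountOn_subadd {V : Type*} (G : SimpleGraph V) (A A₁ A₂ : Finset V)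
    (h : ∀ e ∈ G.edgeSet, (∀ v ∈ e, v ∈ (A : Set V)) →
      (∀ v ∈ e, v ∈ (A₁ : Set V)) ∨ (∀ v ∈ e, v ∈ (A₂ : Set V))) :
    edgeCountOn G ↑A ≤ edgeCountOn G ↑A₁ + edgeCountOn G ↑A₂ := by
  refine le_trans (Set.ncard_le_ncard ?_ (((edgeSetOn_finite G A₁).union (edgeSetOn_finite G A₂))))
    (Set.ncard_union_le _ _)
  rintro e ⟨he, hA⟩
  rcases h e he hA with h' | h'
  · exact Or.inl ⟨he, h'⟩
  · exact Or.inr ⟨he, h'⟩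

lemma edgeCountOn_eq_zero {V : Type*} [DecidableEq V] (G : SimpleGraph V) (A : Finset V) (h : A.card ≤ 1) :
    edgeCountOn G ↑A = 0 := by
  rw [edgeCountOn, Set.ncard_eq_zero (edgeSetOn_finite G A)]
  ext e
  simp only [Set.mem_setOf_eq, Set.mem_empty_iff_false, iff_false, not_and]
  intro he hA
  induction e with
  | _ a b =>
    have hab : G.Adj a b := he
    have : ({a, b} : Finset V) ⊆ A := by
      intro v hv
      rcases Finset.mem_insert.1 hv with rfl | hv
      · exact hA v (Sym2.mem_mk_left _ _)
      · exact hA v (Finset.mem_singleton.1 hv ▸ Sym2.mem_mk_right _ _)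
    have h2 : 2 ≤ A.card := by
      calc 2 = ({a, b} : Finset V).card := (Finset.card_pair hab.ne).symm
        _ ≤ A.card := Finset.card_le_card this
    omega

lemma split_contradiction {V : Type*} [DecidableEq V] (G : SimpleGraph V) (c : ℝ) (hc : 1 ≤ c)
    (A₀ A₁ A₂ : Finset V) (hbad : IsBad G c A₀)
    (hmin : ∀ A : Finset V, IsBad G c A → A₀.card ≤ A.card)
    (h1 : A₁.card < A₀.card) (h2 : A₂.card < A₀.card)
    (hsum : A₁.card + A₂.card ≤ A₀.card + 1)
    (hedge : ∀ e ∈ G.edgeSet, (∀ v ∈ e, v ∈ (A₀ : Set V)) →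
      (∀ v ∈ e, v ∈ (A₁ : Set V)) ∨ (∀ v ∈ e, v ∈ (A₂ : Set V))) : False := by
  obtain ⟨hcard, hgt⟩ := hbad
  have hsub := edgeCountOn_subadd G A₀ A₁ A₂ hedge
  have key : ∀ A : Finset V, A.card < A₀.card →
      (edgeCountOn G ↑A : ℝ) ≤ max 0 (1 + c * ((A.card : ℝ) - 2)) := by
    intro A hA
    rcases le_or_gt A.card 1 with h | h
    · rw [edgeCountOn_eq_zero G A h]; simp
    · have : ¬ IsBad G c A := fun hb => absurd (hmin A hb) (by omega)
      rw [IsBad, not_and] at this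
      have := not_lt.1 (this h)
      exact le_max_of_le_right this
  have k1 := key A₁ h1
  have k2 := key A₂ h2
  have hsubR : (edgeCountOn G ↑A₀ : ℝ) ≤ (edgeCountOn G ↑A₁ : ℝ) + (edgeCountOn G ↑A₂ : ℝ) := by
    exact_mod_cast hsub
  have hn0 : (2 : ℝ) ≤ (A₀.card : ℝ) := by exact_mod_cast hcard
  have hn1 : (A₁.card : ℝ) < (A₀.card : ℝ) := by exact_mod_cast h1
  have hn2 : (A₂.card : ℝ) < (A₀.card : ℝ) := by exact_mod_cast h2
  have hnsum : (A₁.card : ℝ) + (A₂.card : ℝ) ≤ (A₀.card : ℝ) + 1 := by exact_mod_cast hsum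
  have hn1' : (A₁.card : ℝ) ≤ (A₀.card : ℝ) - 1 := by
    have : A₁.card ≤ A₀.card - 1 := by omega
    have h' : (A₁.card : ℝ) ≤ ((A₀.card - 1 : ℕ) : ℝ) := by exact_mod_cast this
    rw [Nat.cast_sub (by omega)] at h'; simpa using h'
  have hn2' : (A₂.card : ℝ) ≤ (A₀.card : ℝ) - 1 := by
    have : A₂.card ≤ A₀.card - 1 := by omega
    have h' : (A₂.card : ℝ) ≤ ((A₀.card - 1 : ℕ) : ℝ) := by exact_mod_cast this
    rw [Nat.cast_sub (by omega)] at h'; simpa using h'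
  rcases max_cases (0:ℝ) (1 + c * ((A₁.card : ℝ) - 2)) with ⟨e1, he1⟩ | ⟨e1, he1⟩ <;>
  rcases max_cases (0:ℝ) (1 + c * ((A₂.card : ℝ) - 2)) with ⟨e2, he2⟩ | ⟨e2, he2⟩ <;>
  rw [e1] at k1 <;> rw [e2] at k2 <;> nlinarith [hgt, hsubR, k1, k2]

lemma component_split {V : Type*} [DecidableEq V] (G : SimpleGraph V) (S : Finset V)
    (h : ¬ (G.induce (S : Set V)).Preconnected) :
    ∃ B : Finset V, B ⊆ S ∧ B.Nonempty ∧ (S \ B).Nonempty ∧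
      (∀ a b : V, G.Adj a b → a ∈ S → b ∈ S → (a ∈ B ↔ b ∈ B)) := by
  rw [SimpleGraph.Preconnected] at h
  push_neg at h
  obtain ⟨u, v, huv⟩ := h
  classical
  set B := S.filter (fun a => ∃ h : a ∈ S, (G.induce (S : Set V)).Reachable u ⟨a, h⟩) with hB
  have hmemB : ∀ a : V, a ∈ B ↔ ∃ h : a ∈ S, (G.induce (S : Set V)).Reachable u ⟨a, h⟩ := by
    intro a
    simp only [hB, Finset.mem_filter, and_iff_right_iff_imp]
    rintro ⟨h, _⟩; exact h
  have huS : (u : V) ∈ S := u.2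
  have hvS : (v : V) ∈ S := v.2
  have hcl : ∀ a b : V, G.Adj a b → a ∈ S → b ∈ S → a ∈ B → b ∈ B := by
    intro a b hab haS hbS haB
    obtain ⟨h, hr⟩ := (hmemB a).1 haB
    refine (hmemB b).2 ⟨hbS, hr.trans ?_⟩
    exact SimpleGraph.Adj.reachable (by exact hab : (G.induce (S : Set V)).Adj ⟨a, h⟩ ⟨b, hbS⟩)
  refine ⟨B, Finset.filter_subset _ _, ⟨u, (hmemB u).2 ⟨huS, by rw [show (⟨(u : V), huS⟩ : (S : Set V)) = u from Subtype.ext rfl]⟩⟩,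
    ⟨v, Finset.mem_sdiff.2 ⟨hvS, fun hvB => ?_⟩⟩, fun a b hab haS hbS =>
      ⟨hcl a b hab haS hbS, hcl b a hab.symm hbS haS⟩⟩
  obtain ⟨h, hr⟩ := (hmemB v).1 hvB
  exact huv (by rwa [show (⟨(v : V), h⟩ : (S : Set V)) = v from Subtype.ext rfl] at hr)

/-- If `A₀` is a minimal (by size) bad set for a constant `c ≥ 1`, then the
induced subgraph `G[A₀]` is 2-connected: `|A₀| ≥ 3`, `G[A₀]` is connected, and
it remains connected after deleting any single vertex. -/
theorem minimal_bad_set_two_connected {V : Type*} [DecidableEq V]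
    (G : SimpleGraph V) (c : ℝ) (hc : 1 ≤ c) (A₀ : Finset V)
    (hbad : IsBad G c A₀) (hmin : ∀ A : Finset V, IsBad G c A → A₀.card ≤ A.card) :
    3 ≤ A₀.card ∧ (G.induce (↑A₀ : Set V)).Connected ∧
      ∀ x ∈ A₀, (G.induce ((A₀.erase x : Finset V) : Set V)).Connected := by
  have h3 : 3 ≤ A₀.card := by
    by_contra h3
    have h2 : A₀.card = 2 := by have := hbad.1; omega
    obtain ⟨a, b, hab, hA⟩ := Finset.card_eq_two.1 h2
    have hsub : {e ∈ G.edgeSet | ∀ v ∈ e, v ∈ (↑A₀ : Set V)} ⊆ {s(a, b)} := by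
      rintro e ⟨he, hmem⟩
      induction e with
      | _ x y =>
        have hxy : G.Adj x y := he
        have hx : x ∈ A₀ := hmem x (Sym2.mem_mk_left _ _)
        have hy : y ∈ A₀ := hmem y (Sym2.mem_mk_right _ _)
        rw [hA, Finset.mem_insert, Finset.mem_singleton] at hx hy
        rcases hx with rfl | rfl <;> rcases hy with rfl | rfl
        · exact absurd rfl hxy.ne
        · rfl
        · exact Sym2.eq_swap
        · exact absurd rfl hxy.ne
    have hle : edgeCountOn G ↑A₀ ≤ 1 := by
      rw [edgeCountOn]
      calc {e ∈ G.edgeSet | ∀ v ∈ e, v ∈ (↑A₀ : Set V)}.ncard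
          ≤ ({s(a, b)} : Set (Sym2 V)).ncard :=
            Set.ncard_le_ncard hsub (Set.finite_singleton _)
        _ = 1 := Set.ncard_singleton _
    have hgt := hbad.2
    rw [h2] at hgt
    have hleR : (edgeCountOn G ↑A₀ : ℝ) ≤ 1 := by exact_mod_cast hle
    norm_num at hgt
    linarith
  refine ⟨h3, ?_, ?_⟩
  · rw [SimpleGraph.connected_iff]
    constructor
    · by_contra hpc
      obtain ⟨B, hBsub, ⟨u, huB⟩, ⟨v, hv⟩, hcl⟩ := component_split G A₀ hpc
      obtain ⟨hvS, hvB⟩ := Finset.mem_sdiff.1 hv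
      refine split_contradiction G c hc A₀ B (A₀ \ B) hbad hmin ?_ ?_ ?_ ?_
      · exact Finset.card_lt_card ⟨hBsub, fun hs => hvB (hs hvS)⟩
      · have := Finset.card_sdiff_of_subset hBsub
        have hB1 : 1 ≤ B.card := Finset.card_pos.2 ⟨u, huB⟩
        have := Finset.card_le_card hBsub
        omega
      · have := Finset.card_sdiff_of_subset hBsub
        have := Finset.card_le_card hBsub
        omega
      · intro e he hA
        induction e with
        | _ a b =>
          have hab : G.Adj a b := (SimpleGraph.mem_edgeSet G).1 he
          have haS : a ∈ A₀ := hA a (Sym2.mem_mk_left _ _)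
          have hbS : b ∈ A₀ := hA b (Sym2.mem_mk_right _ _)
          by_cases haB : a ∈ B
          · left
            intro w hw
            rcases Sym2.mem_iff.1 hw with rfl | rfl
            · exact haB
            · exact (hcl a w hab haS hbS).1 haB
          · right
            intro w hw
            rcases Sym2.mem_iff.1 hw with rfl | rfl
            · exact Finset.mem_coe.2 (Finset.mem_sdiff.2 ⟨haS, haB⟩)
            · exact Finset.mem_coe.2 (Finset.mem_sdiff.2
                ⟨hbS, fun hbB => haB ((hcl a w hab haS hbS).2 hbB)⟩)
    · obtain ⟨a, ha⟩ := Finset.card_pos.1 (by omega : 0 < A₀.card)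
      exact ⟨⟨a, Finset.mem_coe.2 ha⟩⟩
  · intro x hx
    set S := A₀.erase x with hS
    have hcardS : S.card = A₀.card - 1 := Finset.card_erase_of_mem hx
    rw [SimpleGraph.connected_iff]
    constructor
    · by_contra hpc
      obtain ⟨B, hBsub, ⟨u, huB⟩, ⟨v, hv⟩, hcl⟩ := component_split G S hpc
      obtain ⟨hvS, hvB⟩ := Finset.mem_sdiff.1 hv
      have hxS : x ∉ S := Finset.notMem_erase x A₀
      have hxB : x ∉ B := fun h => hxS (hBsub h)
      have hxB' : x ∉ S \ B := fun h => hxS (Finset.mem_sdiff.1 h).1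
      have hc1 : (insert x B).card = B.card + 1 := Finset.card_insert_of_notMem hxB
      have hc2 : (insert x (S \ B)).card = (S \ B).card + 1 :=
        Finset.card_insert_of_notMem hxB'
      have hBlt : B.card < S.card := Finset.card_lt_card ⟨hBsub, fun hs => hvB (hs hvS)⟩
      have hSBlt : (S \ B).card < S.card := by
        have := Finset.card_sdiff_of_subset hBsub
        have hB1 : 1 ≤ B.card := Finset.card_pos.2 ⟨u, huB⟩
        omega
      have hsdc := Finset.card_sdiff_of_subset hBsub
      have hBle := Finset.card_le_card hBsub
      refine split_contradiction G c hc A₀ (insert x B) (insert x (S \ B)) hbad hmin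
        (by omega) (by omega) (by omega) ?_
      intro e he hA
      induction e with
      | _ a b =>
        have hab : G.Adj a b := (SimpleGraph.mem_edgeSet G).1 he
        have haA : a ∈ A₀ := hA a (Sym2.mem_mk_left _ _)
        have hbA : b ∈ A₀ := hA b (Sym2.mem_mk_right _ _)
        have memleft : ∀ w : V, w = x ∨ w ∈ B → w ∈ ((insert x B : Finset V) : Set V) := by
          rintro w (rfl | hw)
          · exact Finset.mem_coe.2 (Finset.mem_insert_self _ _)
          · exact Finset.mem_coe.2 (Finset.mem_insert_of_mem hw)
        have memright : ∀ w : V, w = x ∨ w ∈ S \ B →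
            w ∈ ((insert x (S \ B) : Finset V) : Set V) := by
          rintro w (rfl | hw)
          · exact Finset.mem_coe.2 (Finset.mem_insert_self _ _)
          · exact Finset.mem_coe.2 (Finset.mem_insert_of_mem hw)
        by_cases hax : a = x
        · subst hax
          have hbx : b ≠ a := hab.ne'
          have hbS : b ∈ S := Finset.mem_erase.2 ⟨hbx, hbA⟩
          by_cases hbB : b ∈ B
          · left
            intro w hw
            rcases Sym2.mem_iff.1 hw with rfl | rfl
            · exact memleft w (Or.inl rfl)
            · exact memleft w (Or.inr hbB)
          · right
            intro w hw
            rcases Sym2.mem_iff.1 hw with rfl | rfl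
            · exact memright w (Or.inl rfl)
            · exact memright w (Or.inr (Finset.mem_sdiff.2 ⟨hbS, hbB⟩))
        · by_cases hbx : b = x
          · subst hbx
            have haS : a ∈ S := Finset.mem_erase.2 ⟨hax, haA⟩
            by_cases haB : a ∈ B
            · left
              intro w hw
              rcases Sym2.mem_iff.1 hw with rfl | rfl
              · exact memleft w (Or.inr haB)
              · exact memleft w (Or.inl rfl)
            · right
              intro w hw
              rcases Sym2.mem_iff.1 hw with rfl | rfl
              · exact memright w (Or.inr (Finset.mem_sdiff.2 ⟨haS, haB⟩))
              · exact memright w (Or.inl rfl)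
          · have haS : a ∈ S := Finset.mem_erase.2 ⟨hax, haA⟩
            have hbS : b ∈ S := Finset.mem_erase.2 ⟨hbx, hbA⟩
            by_cases haB : a ∈ B
            · left
              intro w hw
              rcases Sym2.mem_iff.1 hw with rfl | rfl
              · exact memleft w (Or.inr haB)
              · exact memleft w (Or.inr ((hcl a w hab haS hbS).1 haB))
            · right
              intro w hw
              rcases Sym2.mem_iff.1 hw with rfl | rfl
              · exact memright w (Or.inr (Finset.mem_sdiff.2 ⟨haS, haB⟩))
              · exact memright w (Or.inr (Finset.mem_sdiff.2
                  ⟨hbS, fun hbB => haB ((hcl a w hab haS hbS).2 hbB)⟩))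
    · obtain ⟨a, ha⟩ := Finset.card_pos.1 (by omega : 0 < S.card)
      exact ⟨⟨a, Finset.mem_coe.2 ha⟩⟩
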